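/- (Equivalence of the two generalized gradient conditions.) Fix an integer N ≥ 2 and, for i ∈ {1,2}, functions j_i : Σ_N × Λ_N → ℝ, written j_η(x, x+e^{(i)}) := j_i(η, x). The following are equivalent: (I) there exist n₀ ∈ ℕ, functions h_{i,n} : Σ_N → ℝ and functions p_{i,n} : Λ_N → ℝ with ∑_{z∈Λ_N} p_{i,n}(z) = 0 for all i,n, such that j_η(x, x+e^{(i)}) = ∑_{n=1}^{n₀} ∑_{y∈Λ_N} p_{i,n}(y−x) (τ_y h_{i,n})(η) for all η, x, i; (II) there exist functions h_{i,j} : Σ_N → ℝ (i,j ∈ {1,2}) such that j_η(x, x+e^{(i)}) = ∑_{j=1}^{2} [(τ_{x+e^{(j)}} h_{i,j})(η) − (τ_x h_{i,j})(η)] for all η, x, i. -/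
import Mathlib


open Finset

/-- The two-dimensional discrete torus `Λ_N = ℤ²/Nℤ²`. -/
abbrev Torus (N : ℕ) := ZMod N × ZMod N

/-- Particle configurations `Σ_N = {0,1}^{Λ_N}`. -/
abbrev Config (N : ℕ) := Torus N → Bool

/-- Occupation number as a real number. -/
noncomputable def bval (b : Bool) : ℝ := if b then 1 else 0

/-- The four unit directions `e¹, e², -e¹, -e²`. -/
def dvec (N : ℕ) : Fin 4 → Torus N := ![(1, 0), (0, 1), (-1, 0), (0, -1)]

/-- Reversal of a direction. -/
def rev : Fin 4 → Fin 4 := ![2, 3, 0, 1]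

/-- The two coordinate unit vectors `e¹, e²`. -/
def ee (N : ℕ) : Fin 2 → Torus N := ![(1, 0), (0, 1)]

/-- `η^{x,y}` : exchange the occupation values at `x` and `y`. -/
def swap {N : ℕ} (η : Config N) (x y : Torus N) : Config N :=
  fun z => if z = x then η y else if z = y then η x else η z

/-- Translation of configurations, `(τ_z η)(w) = η(w - z)`. -/
def trc {N : ℕ} (z : Torus N) (η : Config N) : Config N := fun w => η (w - z)

/-- Translation of functions, `(τ_z h)(η) = h(τ_{-z} η)`. -/
def trf {N : ℕ} (z : Torus N) (h : Config N → ℝ) : Config N → ℝ := fun η => h (trc (-z) η)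

/-- The local function `g` on the face with lower-left corner `0`. -/
noncomputable def gfun {N : ℕ} (α : ℝ) (η : Config N) : ℝ :=
  if η (0, 0) = true ∧ η (1, 1) = true ∧ η (1, 0) = false ∧ η (0, 1) = false then α
  else if η (1, 0) = true ∧ η (0, 1) = true ∧ η (0, 0) = false ∧ η (1, 1) = false then α
  else 0

/-- Lower-left corner of the anticlockwise face `f⁺(x, x + dvec d)` traversing the edge
according to its orientation. -/
def fplus {N : ℕ} (x : Torus N) (d : Fin 4) : Torus N :=
  ![x, x - (1, 0), x - (1, 0) - (0, 1), x - (0, 1)] d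

/-- Lower-left corner of the anticlockwise face `f⁻(x, x + dvec d)` traversing the reversed
edge according to its orientation. -/
def fminus {N : ℕ} (x : Torus N) (d : Fin 4) : Torus N :=
  ![x - (0, 1), x, x - (1, 0), x - (1, 0) - (0, 1)] d

/-- The jump rate `c_{x, x + dvec d}(η)`. -/
noncomputable def rate {N : ℕ} (α : ℝ) (η : Config N) (x : Torus N) (d : Fin 4) : ℝ :=
  bval (η x) * (1 - bval (η (x + dvec N d)))
    + bval (η x) * (trf (fplus x d) (gfun α) η - trf (fminus x d) (gfun α) η)

/-- The Bernoulli product measure `ν_ρ`. -/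
noncomputable def nu {N : ℕ} [NeZero N] (ρ : ℝ) (η : Config N) : ℝ :=
  ∏ x : Torus N, if η x then ρ else 1 - ρ

/-- The generator `L_N`. -/
noncomputable def gen {N : ℕ} [NeZero N] (α : ℝ) (F : Config N → ℝ) (η : Config N) : ℝ :=
  ∑ x : Torus N, ∑ d : Fin 4, rate α η x d * (F (swap η x (x + dvec N d)) - F η)

/-- Sum of an edge function over the four directed edges of the anticlockwise oriented face
with lower-left corner `w`. -/
noncomputable def faceCCW {N : ℕ} (F : Torus N → Fin 4 → ℝ) (w : Torus N) : ℝ :=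
  F w 0 + F (w + (1, 0)) 1 + F (w + (1, 0) + (0, 1)) 2 + F (w + (0, 1)) 3

/-- Sum of an edge function over the four directed edges of the clockwise oriented face
with lower-left corner `w`. -/
noncomputable def faceCW {N : ℕ} (F : Torus N → Fin 4 → ℝ) (w : Torus N) : ℝ :=
  F w 1 + F (w + (0, 1)) 0 + F (w + (1, 0) + (0, 1)) 3 + F (w + (1, 0)) 2


/-! ### Auxiliary lemmas -/

lemma zmod_sum_eq_range {N : ℕ} [NeZero N] (f : ZMod N → ℝ) :
    ∑ z : ZMod N, f z = ∑ k ∈ Finset.range N, f (k : ZMod N) := by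
  refine Finset.sum_bij' (fun z _ => z.val) (fun k _ => (k : ZMod N)) ?_ ?_ ?_ ?_ ?_
  · intro z _; exact Finset.mem_range.mpr (ZMod.val_lt z)
  · intro k _; exact Finset.mem_univ _
  · intro z _; simp [ZMod.natCast_val, ZMod.cast_id]
  · intro k hk; exact ZMod.val_cast_of_lt (Finset.mem_range.mp hk)
  · intro z _; simp [ZMod.natCast_val, ZMod.cast_id]

/-- Discrete "antiderivative" on `ZMod N`. -/
noncomputable def Qf {N : ℕ} (f : ZMod N → ℝ) (a : ZMod N) : ℝ :=
  -∑ k ∈ Finset.range a.val, f ((k + 1 : ℕ) : ZMod N)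

lemma Qf_grad {N : ℕ} [NeZero N] (f : ZMod N → ℝ) (a : ZMod N) :
    Qf f (a - 1) - Qf f a = f a - (if a = 0 then ∑ z : ZMod N, f z else 0) := by
  by_cases ha : a = 0
  · subst ha
    obtain ⟨M, hM⟩ := Nat.exists_eq_succ_of_ne_zero (NeZero.ne N)
    subst hM
    simp only [if_pos rfl, Qf, zero_sub, ZMod.val_zero, Finset.range_zero,
      Finset.sum_empty, neg_zero, sub_zero]
    rw [ZMod.val_neg_one, zmod_sum_eq_range, Finset.sum_range_succ']
    push_cast
    ring
  · obtain ⟨m, hm⟩ := Nat.exists_eq_succ_of_ne_zero (fun h => ha ((ZMod.val_eq_zero a).mp h))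
    have hmlt : m < N := lt_of_le_of_lt (Nat.le_succ m) (hm ▸ ZMod.val_lt a)
    have ha1 : a - 1 = ((m : ℕ) : ZMod N) := by
      have : a = ((m + 1 : ℕ) : ZMod N) := by
        rw [← Nat.succ_eq_add_one, ← hm, ZMod.natCast_val, ZMod.cast_id]
      rw [this]; push_cast; ring
    have hval : (a - 1).val = m := by rw [ha1, ZMod.val_cast_of_lt hmlt]
    have hfa : ((m + 1 : ℕ) : ZMod N) = a := by
      rw [← Nat.succ_eq_add_one, ← hm, ZMod.natCast_val, ZMod.cast_id]
    simp only [Qf, hval, hm, Finset.sum_range_succ, hfa, if_neg ha]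
    ring

lemma trc_trc {N : ℕ} (a b : Torus N) (η : Config N) : trc a (trc b η) = trc (a + b) η := by
  funext w; simp [trc, sub_sub]

lemma trf_trf {N : ℕ} (a b : Torus N) (g : Config N → ℝ) (η : Config N) :
    trf a (trf b g) η = trf (a + b) g η := by
  show g (trc (-b) (trc (-a) η)) = g (trc (-(a + b)) η)
  rw [trc_trc]
  have : -b + -a = -(a + b) := by ring
  rw [this]

lemma trf_sum' {N : ℕ} [NeZero N] (q : Torus N → ℝ) (g : Config N → ℝ) (w : Torus N) (η : Config N) :
    ∑ z : Torus N, q z * trf z g (trc (-w) η) = ∑ z : Torus N, q (z - w) * trf z g η := by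
  have h1 : ∀ z : Torus N, trf z g (trc (-w) η) = trf (w + z) g η := by
    intro z
    show trf w (trf z g) η = _
    rw [trf_trf]
  simp_rw [h1]
  refine Fintype.sum_equiv (Equiv.addRight w) _ _ ?_
  intro z
  simp only [Equiv.coe_addRight, add_sub_cancel_right]
  rw [add_comm]

/-- Column sums of a function on the torus. -/
noncomputable def Pcol {N : ℕ} [NeZero N] (p : Torus N → ℝ) (a : ZMod N) : ℝ := ∑ b : ZMod N, p (a, b)

/-- The two "potential" functions realizing a mean-zero function as a sum of gradients. -/
noncomputable def qdec {N : ℕ} [NeZero N] (p : Torus N → ℝ) : Fin 2 → Torus N → ℝ :=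
  ![fun z => if z.2 = 0 then Qf (Pcol p) z.1 else 0,
    fun z => Qf (fun k => p (z.1, k)) z.2]

lemma qdec_spec {N : ℕ} [NeZero N] (p : Torus N → ℝ) (hp : ∑ z : Torus N, p z = 0)
    (z : Torus N) :
    p z = ∑ jj : Fin 2, (qdec p jj (z - ee N jj) - qdec p jj z) := by
  have hsumP : ∑ a : ZMod N, Pcol p a = 0 := by
    simp only [Pcol, ← Fintype.sum_prod_type]
    exact hp
  obtain ⟨z1, z2⟩ := z
  rw [Fin.sum_univ_two]
  have e0 : ee N 0 = ((1 : ZMod N), (0 : ZMod N)) := rfl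
  have e1 : ee N 1 = ((0 : ZMod N), (1 : ZMod N)) := rfl
  simp only [qdec, e0, e1, Matrix.cons_val_zero, Matrix.cons_val_one, Matrix.head_cons,
    Prod.mk_sub_mk, sub_zero]
  have h1 := Qf_grad (Pcol p) z1
  have h2 := Qf_grad (fun k => p (z1, k)) z2
  have h1' : Qf (Pcol p) (z1 - 1) - Qf (Pcol p) z1 = Pcol p z1 := by
    rw [h1]; split_ifs with hz1
    · rw [hsumP]; ring
    · ring
  by_cases h : z2 = 0
  · subst h
    simp only [if_pos rfl, eq_self_iff_true, if_true] at h2 ⊢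
    have hPc : Pcol p z1 = ∑ b : ZMod N, p (z1, b) := rfl
    rw [h1']
    linarith [h2, hPc]
  · simp only [if_neg h] at h2 ⊢
    linarith [h2]

/-- equivalence of the two generalized gradient conditions for a
translation-covariantly given current `j_η(x, x + e⁽ⁱ⁾) = j i η x`. -/
theorem stmt_7 (N : ℕ) [NeZero N] (hN : 2 ≤ N) (j : Fin 2 → Config N → Torus N → ℝ) :
    (∃ (n₀ : ℕ) (h : Fin 2 → Fin n₀ → Config N → ℝ) (p : Fin 2 → Fin n₀ → Torus N → ℝ),
      (∀ (i : Fin 2) (n : Fin n₀), ∑ z : Torus N, p i n z = 0) ∧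
      (∀ (i : Fin 2) (η : Config N) (x : Torus N),
        j i η x = ∑ n : Fin n₀, ∑ y : Torus N, p i n (y - x) * trf y (h i n) η))
    ↔ (∃ h : Fin 2 → Fin 2 → Config N → ℝ,
      ∀ (i : Fin 2) (η : Config N) (x : Torus N),
        j i η x = ∑ jj : Fin 2, (trf (x + ee N jj) (h i jj) η - trf x (h i jj) η)) := by
  constructor
  · rintro ⟨n₀, h, p, hp0, hrep⟩
    refine ⟨fun i jj η => ∑ n : Fin n₀, ∑ z : Torus N, qdec (p i n) jj z * trf z (h i n) η, ?_⟩
    intro i η x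
    have key : ∀ (w : Torus N) (jj : Fin 2),
        trf w (fun σ => ∑ n : Fin n₀, ∑ z : Torus N, qdec (p i n) jj z * trf z (h i n) σ) η
        = ∑ n : Fin n₀, ∑ z : Torus N, qdec (p i n) jj (z - w) * trf z (h i n) η := by
      intro w jj
      show (∑ n : Fin n₀, ∑ z : Torus N, qdec (p i n) jj z * trf z (h i n) (trc (-w) η)) = _
      exact Finset.sum_congr rfl fun n _ => trf_sum' _ _ _ _
    simp only [key]
    rw [hrep i η x]
    have step : ∀ (n : Fin n₀) (z : Torus N),
        p i n (z - x) * trf z (h i n) η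
        = ∑ jj : Fin 2, ((qdec (p i n) jj (z - (x + ee N jj)) * trf z (h i n) η)
            - qdec (p i n) jj (z - x) * trf z (h i n) η) := by
      intro n z
      rw [qdec_spec (p i n) (hp0 i n) (z - x), Finset.sum_mul]
      apply Finset.sum_congr rfl
      intro jj _
      rw [sub_mul, sub_sub]
    simp_rw [step]
    have swap3 : (∑ n : Fin n₀, ∑ z : Torus N, ∑ jj : Fin 2,
        ((qdec (p i n) jj (z - (x + ee N jj)) * trf z (h i n) η)
          - qdec (p i n) jj (z - x) * trf z (h i n) η))
        = ∑ jj : Fin 2, ∑ n : Fin n₀, ∑ z : Torus N,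
        ((qdec (p i n) jj (z - (x + ee N jj)) * trf z (h i n) η)
          - qdec (p i n) jj (z - x) * trf z (h i n) η) := by
      have hin : ∀ n : Fin n₀, (∑ z : Torus N, ∑ jj : Fin 2,
          ((qdec (p i n) jj (z - (x + ee N jj)) * trf z (h i n) η)
            - qdec (p i n) jj (z - x) * trf z (h i n) η))
          = ∑ jj : Fin 2, ∑ z : Torus N,
          ((qdec (p i n) jj (z - (x + ee N jj)) * trf z (h i n) η)
            - qdec (p i n) jj (z - x) * trf z (h i n) η) := fun n => Finset.sum_comm
      simp_rw [hin]
      exact Finset.sum_comm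
    rw [swap3]
    apply Finset.sum_congr rfl
    intro jj _
    rw [← Finset.sum_sub_distrib]
    apply Finset.sum_congr rfl
    intro n _
    rw [← Finset.sum_sub_distrib]
  · rintro ⟨h, hh⟩
    refine ⟨2, h, fun i n z => (if z = ee N n then 1 else 0) - (if z = (0 : Torus N) then 1 else 0),
      ?_, ?_⟩
    · intro i n
      simp [Finset.sum_sub_distrib, Finset.sum_ite_eq']
    · intro i η x
      rw [hh i η x]
      apply Finset.sum_congr rfl
      intro n _
      have : ∀ y : Torus N,
          ((if y - x = ee N n then (1:ℝ) else 0) - (if y - x = 0 then 1 else 0))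
            * trf y (h i n) η
          = (if y = x + ee N n then trf y (h i n) η else 0)
            - (if y = x then trf y (h i n) η else 0) := by
        intro y
        have hc1 : (y - x = ee N n) = (y = x + ee N n) := propext sub_eq_iff_eq_add'
        have hc0 : (y - x = (0 : Torus N)) = (y = x) := propext sub_eq_zero
        simp only [hc1, hc0, sub_mul, ite_mul, one_mul, zero_mul]
      simp_rw [this]
      rw [Finset.sum_sub_distrib, Finset.sum_ite_eq', Finset.sum_ite_eq']
      simp
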